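/- The Lie-Euler foliate integrator A_{n+1} = exp(τ g(A_n))(A_n + τ f(A_n)) for the system Ȧ = g(A)A + f(A), where g takes values in 𝔰𝔬(n) and f is SO(n)-invariant with f(A) = A V(AᵀA), is foliate: A_{n+1}ᵀ A_{n+1} depends only on A_nᵀ A_n, namely A_{n+1}ᵀA_{n+1} = (I + τV(A_nᵀA_n))ᵀ (A_nᵀA_n)(I + τV(A_nᵀA_n)). -/

import Mathlib

open Matrix

/-- The Lie-Euler integrator `A' = exp(τ g(A))(A + τ f(A))` for
`Ȧ = g(A)A + f(A)`, with `g(A)` skew-symmetric and `f(A) = A V(AᵀA)`, is foliate for the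
foliation of `ℝ^{n×p}` by level sets of `AᵀA`: the updated value of `AᵀA` depends only on
the old one, namely `A'ᵀA' = (1 + τV(AᵀA))ᵀ (AᵀA) (1 + τV(AᵀA))`. -/
theorem lie_euler_foliate (n p : ℕ) (τ : ℝ)
    (V : Matrix (Fin p) (Fin p) ℝ → Matrix (Fin p) (Fin p) ℝ)
    (g : Matrix (Fin n) (Fin p) ℝ → Matrix (Fin n) (Fin n) ℝ)
    (hg : ∀ A, (g A)ᵀ = -(g A))
    (A : Matrix (Fin n) (Fin p) ℝ) :
    (NormedSpace.exp (τ • g A) * (A + τ • (A * V (Aᵀ * A))))ᵀ *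
      (NormedSpace.exp (τ • g A) * (A + τ • (A * V (Aᵀ * A)))) =
    (1 + τ • V (Aᵀ * A))ᵀ * (Aᵀ * A) * (1 + τ • V (Aᵀ * A)) := by
  set E := NormedSpace.exp (τ • g A) with hEdef
  have hE : Eᵀ * E = 1 := by
    rw [hEdef, ← Matrix.exp_transpose, transpose_smul, hg, smul_neg,
      ← Matrix.exp_add_of_commute _ _ (Commute.neg_left (Commute.refl (τ • g A)))]
    simp
  have hE' : ∀ M : Matrix (Fin n) (Fin p) ℝ, Eᵀ * (E * M) = M := by
    intro M; rw [← Matrix.mul_assoc, hE, Matrix.one_mul]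
  have key : A + τ • (A * V (Aᵀ * A)) = A * (1 + τ • V (Aᵀ * A)) := by
    rw [Matrix.mul_add, Matrix.mul_one, Matrix.mul_smul]
  rw [key, transpose_mul, transpose_mul]
  simp only [Matrix.mul_assoc]
  rw [hE']
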